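/- arXiv:2503.15033 — 4 statements merged into one kernel-verified Lean document; each statement's English description precedes it below -/
import Mathlib

section
/- For L ∈ ℝ, let h2(α) = L(L−4)·α² − 4(L−2)·α + 8 − (8α+8)·e^{−Lα/2}. If 4 < L < 6, then h2 has exactly one root in (0,∞) and no root in (−∞,0). If L = 6, then h2(α) ≠ 0 for all α ≠ 0. -/
/-- The closing-condition function for U(2)-invariant gradient Kähler Ricci
solitons on `ℂP²` with a fixed point and a `ℂP¹` singular orbit along which
`f²` takes the value `L`. -/
noncomputable def h2 (L : ℝ) : ℝ → ℝ := fun α =>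
  L * (L - 4) * α ^ 2 - 4 * (L - 2) * α + 8 - (8 * α + 8) * Real.exp (-L * α / 2)

open Real Set

namespace H2Aux

noncomputable def phi (L : ℝ) : ℝ → ℝ := fun α =>
  (L * (L - 4) * α ^ 2 - 4 * (L - 2) * α + 8) * Real.exp (L * α / 2) - 8 * α - 8

noncomputable def phi1 (L : ℝ) : ℝ → ℝ := fun α =>
  (L ^ 2 * (L - 4) / 2 * α ^ 2 - 4 * L * α + 8) * Real.exp (L * α / 2) - 8

noncomputable def phi2 (L : ℝ) : ℝ → ℝ := fun α =>
  L ^ 2 * α * (L * (L - 4) / 4 * α + (L - 6)) * Real.exp (L * α / 2)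

lemma h2_eq (L α : ℝ) : h2 L α = Real.exp (-(L * α / 2)) * phi L α := by
  unfold h2 phi
  rw [show -L * α / 2 = -(L * α / 2) by ring, Real.exp_neg]
  have h := Real.exp_ne_zero (L * α / 2)
  field_simp
  ring

lemma hexp (L α : ℝ) : HasDerivAt (fun x : ℝ => Real.exp (L * x / 2))
    (Real.exp (L * α / 2) * (L / 2)) α := by
  have h : HasDerivAt (fun x : ℝ => L * x / 2) (L / 2) α := by
    simpa using ((hasDerivAt_id α).const_mul L).div_const 2
  exact h.exp

lemma hasDerivAt_phi (L α : ℝ) : HasDerivAt (phi L) (phi1 L α) α := by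
  have hq : HasDerivAt (fun x : ℝ => L * (L - 4) * x ^ 2 - 4 * (L - 2) * x + 8)
      (L * (L - 4) * (2 * α) - 4 * (L - 2)) α := by
    have h1 := (hasDerivAt_pow 2 α).const_mul (L * (L - 4))
    have h2 := (hasDerivAt_id α).const_mul (4 * (L - 2))
    simpa [mul_comm, mul_assoc, mul_left_comm] using (h1.sub h2).add_const 8
  have h3 := (hq.mul (hexp L α)).sub (((hasDerivAt_id α).const_mul 8).add_const 8)
  convert h3 using 1
  · rfl
  · rfl
  · ext x; simp [phi]; ring
  · unfold phi1; ring

lemma hasDerivAt_phi1 (L α : ℝ) : HasDerivAt (phi1 L) (phi2 L α) α := by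
  have hq : HasDerivAt (fun x : ℝ => L ^ 2 * (L - 4) / 2 * x ^ 2 - 4 * L * x + 8)
      (L ^ 2 * (L - 4) / 2 * (2 * α) - 4 * L) α := by
    have h1 := (hasDerivAt_pow 2 α).const_mul (L ^ 2 * (L - 4) / 2)
    have h2 := (hasDerivAt_id α).const_mul (4 * L)
    simpa [mul_comm, mul_assoc, mul_left_comm] using (h1.sub h2).add_const 8
  have h3 := (hq.mul (hexp L α)).sub_const 8
  convert h3 using 1
  · rfl
  · rfl
  · rfl
  · unfold phi2; ring

lemma phi_zero (L : ℝ) : phi L 0 = 0 := by simp [phi]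

lemma phi1_zero (L : ℝ) : phi1 L 0 = 0 := by simp [phi1]

lemma cont_phi (L : ℝ) : Continuous (phi L) :=
  (Differentiable.continuous fun α => (hasDerivAt_phi L α).differentiableAt)

lemma cont_phi1 (L : ℝ) : Continuous (phi1 L) :=
  (Differentiable.continuous fun α => (hasDerivAt_phi1 L α).differentiableAt)

lemma deriv_phi (L : ℝ) : deriv (phi L) = phi1 L :=
  funext fun α => (hasDerivAt_phi L α).deriv

lemma deriv_phi1 (L : ℝ) : deriv (phi1 L) = phi2 L :=
  funext fun α => (hasDerivAt_phi1 L α).deriv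

/-- φ'' > 0 on negatives when 4 < L ≤ 6. -/
lemma phi2_pos_neg {L : ℝ} (hL4 : 4 < L) (hL6 : L ≤ 6) {α : ℝ} (hα : α < 0) :
    0 < phi2 L α := by
  have hf : L * (L - 4) / 4 * α + (L - 6) < 0 := by
    nlinarith [mul_pos (show (0:ℝ) < L * (L - 4) by nlinarith) (neg_pos.mpr hα)]
  have h : 0 < L ^ 2 * ((α * (L * (L - 4) / 4 * α + (L - 6))) * Real.exp (L * α / 2)) :=
    mul_pos (by positivity) (mul_pos (mul_pos_of_neg_of_neg hα hf) (Real.exp_pos _))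
  have e : phi2 L α = L ^ 2 * ((α * (L * (L - 4) / 4 * α + (L - 6))) * Real.exp (L * α / 2)) := by
    unfold phi2; ring
  linarith [e ▸ h]

/-- On the negative axis φ is positive (4 < L ≤ 6). -/
lemma phi_pos_neg {L : ℝ} (hL4 : 4 < L) (hL6 : L ≤ 6) {α : ℝ} (hα : α < 0) :
    0 < phi L α := by
  have hmono : StrictMonoOn (phi1 L) (Iic 0) := by
    apply strictMonoOn_of_deriv_pos (convex_Iic 0) (cont_phi1 L).continuousOn
    intro x hx
    rw [interior_Iic] at hx
    rw [deriv_phi1]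
    exact phi2_pos_neg hL4 hL6 hx
  have h1 : ∀ x < 0, phi1 L x < 0 := by
    intro x hx
    have := hmono (le_of_lt hx) self_mem_Iic hx
    rwa [phi1_zero] at this
  have hanti : StrictAntiOn (phi L) (Iic 0) := by
    apply strictAntiOn_of_deriv_neg (convex_Iic 0) (cont_phi L).continuousOn
    intro x hx
    rw [interior_Iic] at hx
    rw [deriv_phi]
    exact h1 x hx
  have := hanti (le_of_lt hα) self_mem_Iic hα
  rwa [phi_zero] at this

/-- L = 6: φ'' > 0 on positives. -/
lemma phi2_pos_pos6 {α : ℝ} (hα : 0 < α) : 0 < phi2 6 α := by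
  have e : phi2 6 α = 108 * (α * α * Real.exp (6 * α / 2)) := by unfold phi2; ring
  rw [e]
  have := mul_pos (mul_pos hα hα) (Real.exp_pos (6 * α / 2))
  linarith

/-- L = 6: φ > 0 on positives. -/
lemma phi_pos_pos6 {α : ℝ} (hα : 0 < α) : 0 < phi 6 α := by
  have hmono : StrictMonoOn (phi1 6) (Ici 0) := by
    apply strictMonoOn_of_deriv_pos (convex_Ici 0) (cont_phi1 6).continuousOn
    intro x hx
    rw [interior_Ici] at hx
    rw [deriv_phi1]
    exact phi2_pos_pos6 hx
  have h1 : ∀ x, 0 < x → 0 < phi1 6 x := by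
    intro x hx
    have := hmono self_mem_Ici (le_of_lt hx) hx
    rwa [phi1_zero] at this
  have hmono2 : StrictMonoOn (phi 6) (Ici 0) := by
    apply strictMonoOn_of_deriv_pos (convex_Ici 0) (cont_phi 6).continuousOn
    intro x hx
    rw [interior_Ici] at hx
    rw [deriv_phi]
    exact h1 x hx
  have := hmono2 self_mem_Ici (le_of_lt hα) hα
  rwa [phi_zero] at this

lemma phi2_neg_mid {L : ℝ} (hL4 : 4 < L) (hL6 : L < 6) {α : ℝ} (h0 : 0 < α)
    (hβ : α < 4 * (6 - L) / (L * (L - 4))) : phi2 L α < 0 := by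
  have hLL4 : 0 < L * (L - 4) := by nlinarith
  have hkey : L * (L - 4) / 4 * (4 * (6 - L) / (L * (L - 4))) = 6 - L := by
    field_simp [show L - 4 ≠ 0 by linarith, show L ≠ 0 by linarith]
  have hm := mul_lt_mul_of_pos_left hβ (show 0 < L * (L - 4) / 4 by positivity)
  have hf : L * (L - 4) / 4 * α + (L - 6) < 0 := by
    rw [hkey] at hm; linarith
  have e : phi2 L α = L ^ 2 * ((α * (L * (L - 4) / 4 * α + (L - 6))) * Real.exp (L * α / 2)) := by
    unfold phi2; ring
  rw [e]
  exact mul_neg_of_pos_of_neg (by positivity)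
    (mul_neg_of_neg_of_pos (mul_neg_of_pos_of_neg h0 hf) (Real.exp_pos _))

lemma phi2_pos_high {L : ℝ} (hL4 : 4 < L) (hL6 : L < 6) {α : ℝ}
    (hβ : 4 * (6 - L) / (L * (L - 4)) < α) : 0 < phi2 L α := by
  have hLL4 : 0 < L * (L - 4) := by nlinarith
  have hβpos : 0 < 4 * (6 - L) / (L * (L - 4)) := div_pos (by nlinarith) hLL4
  have h0 : 0 < α := lt_trans hβpos hβ
  have hkey : L * (L - 4) / 4 * (4 * (6 - L) / (L * (L - 4))) = 6 - L := by
    field_simp [show L - 4 ≠ 0 by linarith, show L ≠ 0 by linarith]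
  have hm := mul_lt_mul_of_pos_left hβ (show 0 < L * (L - 4) / 4 by positivity)
  have hf : 0 < L * (L - 4) / 4 * α + (L - 6) := by
    rw [hkey] at hm; linarith
  have e : phi2 L α = L ^ 2 * ((α * (L * (L - 4) / 4 * α + (L - 6))) * Real.exp (L * α / 2)) := by
    unfold phi2; ring
  rw [e]
  exact mul_pos (by positivity) (mul_pos (mul_pos h0 hf) (Real.exp_pos _))

/-- For 4 < L < 6, φ has a unique positive root. -/
lemma pos_side {L : ℝ} (hL4 : 4 < L) (hL6 : L < 6) :
    ∃! α : ℝ, 0 < α ∧ phi L α = 0 := by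
  set β := 4 * (6 - L) / (L * (L - 4)) with hβdef
  have hL0 : (0:ℝ) < L := by linarith
  have hLL4 : 0 < L * (L - 4) := by nlinarith
  have hβpos : 0 < β := div_pos (by nlinarith) hLL4
  -- φ' strictly decreasing on [0, β]
  have hanti1 : StrictAntiOn (phi1 L) (Icc 0 β) := by
    apply strictAntiOn_of_deriv_neg (convex_Icc 0 β) (cont_phi1 L).continuousOn
    intro x hx
    rw [interior_Icc] at hx
    rw [deriv_phi1]
    exact phi2_neg_mid hL4 hL6 hx.1 hx.2
  have hφ1β : phi1 L β < 0 := by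
    have := hanti1 (left_mem_Icc.mpr hβpos.le) (right_mem_Icc.mpr hβpos.le) hβpos
    rwa [phi1_zero] at this
  -- φ' strictly increasing on [β, ∞)
  have hmono1 : StrictMonoOn (phi1 L) (Ici β) := by
    apply strictMonoOn_of_deriv_pos (convex_Ici β) (cont_phi1 L).continuousOn
    intro x hx
    rw [interior_Ici] at hx
    rw [deriv_phi1]
    exact phi2_pos_high hL4 hL6 hx
  -- a point where φ' > 0
  set A := max (8 / (L * (L - 4)) + 1) (β + 1) with hAdef
  have hA1 : 8 / (L * (L - 4)) + 1 ≤ A := le_max_left _ _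
  have hA2 : β + 1 ≤ A := le_max_right _ _
  have hApos : 0 < A := lt_of_lt_of_le (by linarith) hA2
  have hβA : β < A := by linarith
  have hφ1A : 0 < phi1 L A := by
    have hkey : L * (L - 4) * (8 / (L * (L - 4))) = 8 := by field_simp [show L - 4 ≠ 0 by linarith, show L ≠ 0 by linarith]
    have h8 : 8 + L * (L - 4) ≤ L * (L - 4) * A := by
      nlinarith [mul_le_mul_of_nonneg_left hA1 hLL4.le]
    have hP : 8 < L ^ 2 * (L - 4) / 2 * A ^ 2 - 4 * L * A + 8 := by
      nlinarith [mul_pos (mul_pos hL0 hApos) (show 0 < L * (L - 4) * A - 8 by nlinarith)]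
    have he1 : 1 ≤ Real.exp (L * A / 2) := Real.one_le_exp (by positivity)
    unfold phi1
    nlinarith [mul_le_mul_of_nonneg_left he1 (by linarith :
      (0:ℝ) ≤ L ^ 2 * (L - 4) / 2 * A ^ 2 - 4 * L * A + 8)]
  obtain ⟨α₂, hα₂mem, hα₂root⟩ : ∃ x ∈ Icc β A, phi1 L x = 0 := by
    have h0mem : (0:ℝ) ∈ Icc (phi1 L β) (phi1 L A) := ⟨hφ1β.le, hφ1A.le⟩
    obtain ⟨x, hx, hfx⟩ := intermediate_value_Icc hβA.le (cont_phi1 L).continuousOn h0mem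
    exact ⟨x, hx, hfx⟩
  have hβα₂ : β < α₂ := lt_of_le_of_ne hα₂mem.1 (by
    intro h; rw [← h] at hα₂root; linarith)
  have hα₂pos : 0 < α₂ := lt_trans hβpos hβα₂
  have hφ1neg : ∀ x, 0 < x → x < α₂ → phi1 L x < 0 := by
    intro x hx0 hxα₂
    rcases le_or_gt x β with h | h
    · have := hanti1 (left_mem_Icc.mpr hβpos.le) ⟨hx0.le, h⟩ hx0
      rwa [phi1_zero] at this
    · have := hmono1 (mem_Ici.mpr h.le) (mem_Ici.mpr hα₂mem.1) hxα₂
      rwa [hα₂root] at this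
  have hφ1pos : ∀ x, α₂ < x → 0 < phi1 L x := by
    intro x hx
    have := hmono1 (mem_Ici.mpr hα₂mem.1) (mem_Ici.mpr (le_trans hα₂mem.1 hx.le)) hx
    rwa [hα₂root] at this
  have hφanti : StrictAntiOn (phi L) (Icc 0 α₂) := by
    apply strictAntiOn_of_deriv_neg (convex_Icc 0 α₂) (cont_phi L).continuousOn
    intro x hx
    rw [interior_Icc] at hx
    rw [deriv_phi]
    exact hφ1neg x hx.1 hx.2
  have hφmono : StrictMonoOn (phi L) (Ici α₂) := by
    apply strictMonoOn_of_deriv_pos (convex_Ici α₂) (cont_phi L).continuousOn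
    intro x hx
    rw [interior_Ici] at hx
    rw [deriv_phi]
    exact hφ1pos x hx
  have hφneg : ∀ x, 0 < x → x ≤ α₂ → phi L x < 0 := by
    intro x hx0 hxle
    have := hφanti (left_mem_Icc.mpr hα₂pos.le) ⟨hx0.le, hxle⟩ hx0
    rwa [phi_zero] at this
  have hφα₂ : phi L α₂ < 0 := hφneg α₂ hα₂pos le_rfl
  -- a point where φ > 0
  set B := max (4 / (L - 4) + 1) (α₂ + 1) with hBdef
  have hB1 : 4 / (L - 4) + 1 ≤ B := le_max_left _ _
  have hB2 : α₂ + 1 ≤ B := le_max_right _ _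
  have hBpos : 0 < B := lt_of_lt_of_le (by linarith) hB2
  have hα₂B : α₂ < B := by linarith
  have hh2B : 0 < h2 L B := by
    have hexp1 : Real.exp (-L * B / 2) ≤ 1 := by
      rw [Real.exp_le_one_iff]
      nlinarith [mul_pos hL0 hBpos]
    have hkey : (L - 4) * (4 / (L - 4)) = 4 := by
      field_simp [show L - 4 ≠ 0 by linarith]
    have h4 : 4 + (L - 4) ≤ (L - 4) * B := by
      nlinarith [mul_le_mul_of_nonneg_left hB1 (show (0:ℝ) ≤ L - 4 by linarith)]
    have hE : (0:ℝ) ≤ 8 * B + 8 := by linarith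
    unfold h2
    nlinarith [mul_le_mul_of_nonneg_left hexp1 hE,
      mul_pos (mul_pos hL0 hBpos) (show 0 < (L - 4) * B - 4 by nlinarith)]
  have hφB : 0 < phi L B := by
    rw [h2_eq] at hh2B
    by_contra h
    push_neg at h
    have := mul_nonpos_of_nonneg_of_nonpos (Real.exp_pos (-(L * B / 2))).le h
    linarith
  obtain ⟨r, hrmem, hrroot⟩ : ∃ x ∈ Icc α₂ B, phi L x = 0 := by
    have h0mem : (0:ℝ) ∈ Icc (phi L α₂) (phi L B) := ⟨hφα₂.le, hφB.le⟩
    obtain ⟨x, hx, hfx⟩ := intermediate_value_Icc hα₂B.le (cont_phi L).continuousOn h0mem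
    exact ⟨x, hx, hfx⟩
  have hrα₂ : α₂ < r := lt_of_le_of_ne hrmem.1 (by
    intro h; rw [← h] at hrroot; linarith)
  refine ⟨r, ⟨lt_trans hα₂pos hrα₂, hrroot⟩, ?_⟩
  rintro s ⟨hs0, hsroot⟩
  rcases le_or_gt s α₂ with h | h
  · exact absurd hsroot (ne_of_lt (hφneg s hs0 h))
  · exact hφmono.injOn (mem_Ici.mpr h.le) (mem_Ici.mpr hrmem.1)
      (hsroot.trans hrroot.symm)

end H2Aux

theorem h2_roots (L : ℝ) :
    (4 < L → L < 6 →
      (∃! α : ℝ, 0 < α ∧ h2 L α = 0) ∧ ∀ α : ℝ, α < 0 → h2 L α ≠ 0) ∧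
    (L = 6 → ∀ α : ℝ, α ≠ 0 → h2 L α ≠ 0) := by
  constructor
  · intro hL4 hL6
    constructor
    · obtain ⟨r, ⟨hr0, hrroot⟩, huniq⟩ := H2Aux.pos_side hL4 hL6
      refine ⟨r, ⟨hr0, ?_⟩, ?_⟩
      · rw [H2Aux.h2_eq, hrroot, mul_zero]
      · rintro s ⟨hs0, hsroot⟩
        apply huniq
        refine ⟨hs0, ?_⟩
        rw [H2Aux.h2_eq] at hsroot
        exact (mul_eq_zero.mp hsroot).resolve_left (Real.exp_ne_zero _)
    · intro α hα
      rw [H2Aux.h2_eq]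
      exact ne_of_gt (mul_pos (Real.exp_pos _) (H2Aux.phi_pos_neg hL4 hL6.le hα))
  · intro hL6 α hα
    subst hL6
    rw [H2Aux.h2_eq]
    rcases lt_or_gt_of_ne hα with h | h
    · exact ne_of_gt (mul_pos (Real.exp_pos _)
        (H2Aux.phi_pos_neg (by norm_num) le_rfl h))
    · exact ne_of_gt (mul_pos (Real.exp_pos _) (H2Aux.phi_pos_pos6 h))
end

section
/- Let C ∈ ℝ, let I ⊆ ℝ be an interval, and let f : I → ℝ be a twice differentiable function with f(t) > 0 for all t ∈ I, satisfying −2·f''/f + C·(f')² − 4·(f')²/f² + 4/f² = 1 on I. Then the function t ↦ f(t)⁴·f'(t)²·e^{−C·f(t)²/2} is differentiable on I with derivative t ↦ f'(t)·f(t)³·e^{−C·f(t)²/2}·(4 − f(t)²). -/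
open Set

/-- For a positive solution `f` of the U(2)-invariant Kähler soliton ODE
`−2f''/f + C(f')² − 4(f')²/f² + 4/f² = 1`, the quantity
`f⁴·(f')²·e^{−Cf²/2}` has derivative `f'·f³·e^{−Cf²/2}·(4 − f²)`. -/
theorem kahler_first_integral_deriv (C : ℝ) (I : Set ℝ) (hI : I.OrdConnected)
    (f f' f'' : ℝ → ℝ) (hf : ∀ t ∈ I, 0 < f t)
    (hf' : ∀ t ∈ I, HasDerivWithinAt f (f' t) I t)
    (hf'' : ∀ t ∈ I, HasDerivWithinAt f' (f'' t) I t)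
    (hODE : ∀ t ∈ I,
      -2 * f'' t / f t + C * (f' t) ^ 2 - 4 * (f' t) ^ 2 / (f t) ^ 2 + 4 / (f t) ^ 2 = 1) :
    ∀ t ∈ I,
      HasDerivWithinAt
        (fun s => (f s) ^ 4 * (f' s) ^ 2 * Real.exp (-C * (f s) ^ 2 / 2))
        (f' t * (f t) ^ 3 * Real.exp (-C * (f t) ^ 2 / 2) * (4 - (f t) ^ 2)) I t := by
  intro t ht
  have ha : f t ≠ 0 := (hf t ht).ne'
  have hode := hODE t ht
  have hc : 2 * f'' t * f t ^ 3 =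
      C * f' t ^ 2 * f t ^ 4 - 4 * f' t ^ 2 * f t ^ 2 + 4 * f t ^ 2 - f t ^ 4 := by
    field_simp at hode
    apply mul_left_cancel₀ ha
    linear_combination (-(f t) ^ 3) * hode
  have hp : HasDerivWithinAt (fun s => (f s) ^ 4) (4 * f t ^ 3 * f' t) I t := by
    simpa using (hf' t ht).fun_pow 4
  have hq : HasDerivWithinAt (fun s => (f' s) ^ 2) (2 * f' t * f'' t) I t := by
    simpa using (hf'' t ht).fun_pow 2
  have hr : HasDerivWithinAt (fun s => Real.exp (-C * (f s) ^ 2 / 2))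
      (Real.exp (-C * (f t) ^ 2 / 2) * (-C * (2 * f t * f' t) / 2)) I t := by
    have h1 : HasDerivWithinAt (fun s => -C * (f s) ^ 2 / 2)
        (-C * (2 * f t * f' t) / 2) I t := by
      have := ((hf' t ht).pow 2).const_mul (-C)
      simpa [mul_comm, mul_assoc, mul_left_comm] using this.div_const 2
    exact h1.exp
  have h := (hp.mul hq).mul hr
  refine h.congr_deriv ?_
  have hE := Real.exp_ne_zero (-C * (f t) ^ 2 / 2)
  set E := Real.exp (-C * (f t) ^ 2 / 2)
  simp only [Pi.mul_apply]
  linear_combination (E * f t * f' t) * hc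
end

section
/- Let C ∈ ℝ with C ≠ 0, let I ⊆ ℝ be an interval, and let f : I → ℝ be a twice differentiable function with f(t) > 0 for all t ∈ I, satisfying −2·f''/f + C·(f')² − 4·(f')²/f² + 4/f² = 1 on I. Then the function t ↦ f⁴·(f')²·e^{−C·f²/2} − (e^{−C·f²/2}/C³)·(C²·f²·(f² − 4) + 4C·(f² − 2) + 8) is constant on I; equivalently, there exists D ∈ ℝ such that (f')² = (C²f²(f²−4) + 4C(f²−2) + 8)/(C³·f⁴) + D·f^{−4}·e^{C·f²/2} on I. -/
open Set

/-- First integral of the U(2)-invariant Kähler soliton ODE for `C ≠ 0`: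
`f⁴(f')²e^{−Cf²/2} − (e^{−Cf²/2}/C³)(C²f²(f²−4) + 4C(f²−2) + 8)` is constant;
equivalently `(f')² = (C²f²(f²−4) + 4C(f²−2) + 8)/(C³f⁴) + D·f⁻⁴·e^{Cf²/2}`
for some constant `D`. -/
theorem kahler_first_integral (C : ℝ) (hC : C ≠ 0) (I : Set ℝ) (hI : I.OrdConnected)
    (f f' f'' : ℝ → ℝ) (hf : ∀ t ∈ I, 0 < f t)
    (hf' : ∀ t ∈ I, HasDerivWithinAt f (f' t) I t)
    (hf'' : ∀ t ∈ I, HasDerivWithinAt f' (f'' t) I t)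
    (hODE : ∀ t ∈ I,
      -2 * f'' t / f t + C * (f' t) ^ 2 - 4 * (f' t) ^ 2 / (f t) ^ 2 + 4 / (f t) ^ 2 = 1) :
    (∃ c : ℝ, ∀ t ∈ I,
      (f t) ^ 4 * (f' t) ^ 2 * Real.exp (-C * (f t) ^ 2 / 2)
        - (Real.exp (-C * (f t) ^ 2 / 2) / C ^ 3)
            * (C ^ 2 * (f t) ^ 2 * ((f t) ^ 2 - 4) + 4 * C * ((f t) ^ 2 - 2) + 8) = c) ∧
    (∃ D : ℝ, ∀ t ∈ I,
      (f' t) ^ 2 =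
        (C ^ 2 * (f t) ^ 2 * ((f t) ^ 2 - 4) + 4 * C * ((f t) ^ 2 - 2) + 8)
            / (C ^ 3 * (f t) ^ 4)
          + D * (f t) ^ (-4 : ℤ) * Real.exp (C * (f t) ^ 2 / 2)) := by
  set g : ℝ → ℝ := fun t =>
    (f t) ^ 4 * (f' t) ^ 2 * Real.exp (-C * (f t) ^ 2 / 2)
      - (Real.exp (-C * (f t) ^ 2 / 2) / C ^ 3)
          * (C ^ 2 * (f t) ^ 2 * ((f t) ^ 2 - 4) + 4 * C * ((f t) ^ 2 - 2) + 8) with hg_def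
  have hrel : ∀ t ∈ I, 2 * f'' t * f t
      = C * (f' t) ^ 2 * (f t) ^ 2 - 4 * (f' t) ^ 2 + 4 - (f t) ^ 2 := by
    intro t ht
    have hft := (hf t ht).ne'
    have h := hODE t ht
    field_simp at h
    have h2 : (2 * f'' t * f t
        - (C * (f' t) ^ 2 * (f t) ^ 2 - 4 * (f' t) ^ 2 + 4 - (f t) ^ 2)) * (f t) ^ 3 = 0 := by
      linear_combination -(f t) ^ 3 * h
    rcases mul_eq_zero.mp h2 with h3 | h3
    · linarith
    · exact absurd h3 (pow_ne_zero 3 hft)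
  have hgderiv : ∀ t ∈ I, HasDerivWithinAt g 0 I t := by
    intro t ht
    have hft := hf' t ht
    have hft' := hf'' t ht
    have hE : HasDerivWithinAt (fun t => Real.exp (-C * (f t) ^ 2 / 2))
        (Real.exp (-C * (f t) ^ 2 / 2) * (-C * (2 * f t * f' t) / 2)) I t := by
      have h1 : HasDerivWithinAt (fun t => -C * (f t) ^ 2 / 2)
          (-C * (2 * f t * f' t) / 2) I t := by
        have := ((hft.fun_pow 2).const_mul (-C)).div_const 2
        refine this.congr_deriv ?_
        push_cast
        ring
      exact h1.exp
    have hu : HasDerivWithinAt (fun t => (f t) ^ 4 * (f' t) ^ 2)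
        (4 * (f t) ^ 3 * f' t * (f' t) ^ 2 + (f t) ^ 4 * (2 * f' t * f'' t)) I t := by
      have := (hft.fun_pow 4).fun_mul (hft'.fun_pow 2)
      refine this.congr_deriv ?_
      push_cast
      ring
    have hP : HasDerivWithinAt
        (fun t => C ^ 2 * (f t) ^ 2 * ((f t) ^ 2 - 4) + 4 * C * ((f t) ^ 2 - 2) + 8)
        (C ^ 2 * (2 * f t * f' t) * ((f t) ^ 2 - 4) + C ^ 2 * (f t) ^ 2 * (2 * f t * f' t)
          + 4 * C * (2 * f t * f' t)) I t := by
      have h1 : HasDerivWithinAt (fun t => (f t) ^ 2) (2 * f t * f' t) I t := by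
        have := hft.fun_pow 2
        refine this.congr_deriv ?_
        push_cast
        ring
      have h2 : HasDerivWithinAt (fun t => (f t) ^ 2 - 4) (2 * f t * f' t) I t :=
        h1.sub_const 4
      have := (((h1.const_mul (C ^ 2)).mul h2).add
        ((h1.sub_const (2 : ℝ)).const_mul (4 * C))).add_const 8
      exact this.congr_deriv (by ring)
    have hG := (hu.mul hE).sub ((hE.div_const (C ^ 3)).mul hP)
    refine hG.congr_deriv ?_
    have hr := hrel t ht
    set E := Real.exp (-C * (f t) ^ 2 / 2) with hE_def
    linear_combination (E * (f t) ^ 3 * f' t) * hr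
      + ((f t) ^ 5 - 4 * (f t) ^ 3) * f' t * E * mul_inv_cancel₀ (pow_ne_zero 3 hC)
  have hconst : ∀ x ∈ I, ∀ y ∈ I, g x = g y := by
    intro x hx y hy
    have h1 := hI.convex.norm_image_sub_le_of_norm_hasDerivWithin_le
      (f' := fun _ => (0 : ℝ)) (C := 0) hgderiv (fun t _ => by simp) hy hx
    have h2 : ‖g x - g y‖ ≤ 0 := by simpa using h1
    have h3 : ‖g x - g y‖ = 0 := le_antisymm h2 (norm_nonneg _)
    have h4 : g x - g y = 0 := by simpa using h3
    linarith
  rcases isEmpty_or_nonempty I with hIe | ⟨⟨t₀, ht₀⟩⟩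
  · exact ⟨⟨0, fun t ht => (hIe.false ⟨t, ht⟩).elim⟩,
      ⟨0, fun t ht => (hIe.false ⟨t, ht⟩).elim⟩⟩
  · obtain ⟨c, key⟩ : ∃ c : ℝ, ∀ t ∈ I, g t = c :=
      ⟨g t₀, fun t ht => hconst t ht t₀ ht₀⟩
    refine ⟨⟨c, key⟩, ⟨c, fun t ht => ?_⟩⟩
    have hgt : (f t) ^ 4 * (f' t) ^ 2 * Real.exp (-C * (f t) ^ 2 / 2)
        - (Real.exp (-C * (f t) ^ 2 / 2) / C ^ 3)
            * (C ^ 2 * (f t) ^ 2 * ((f t) ^ 2 - 4) + 4 * C * ((f t) ^ 2 - 2) + 8) = c :=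
      key t ht
    have hft := (hf t ht).ne'
    have hEne : Real.exp (-C * (f t) ^ 2 / 2) ≠ 0 := Real.exp_ne_zero _
    have hEinv : Real.exp (C * (f t) ^ 2 / 2) = (Real.exp (-C * (f t) ^ 2 / 2))⁻¹ := by
      rw [← Real.exp_neg]
      ring_nf
    rw [hEinv]
    simp only [zpow_neg, zpow_ofNat]
    field_simp at hgt ⊢
    linear_combination hgt
end

section
/- Let C, L ∈ ℝ with C ≠ 0 and 0 < L < 4, and define H̄1 : ℝ → ℝ by H̄1(F) = e^{−C(F−L)/2}·(C²F(F−4) + 4C(F−2) + 8) − (C²L(L−4) + 4C(L−2) + 8). Then H̄1(L) = 0; H̄1'(F) = −(C³/2)·e^{−C(F−L)/2}·F·(F−4) for all F ∈ ℝ; H̄1(F) ≠ 0 for all F ∈ (L, 4]; and H̄1 has at most one zero in (4, ∞). -/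
open Set

private lemma Hbar1_deriv (C L : ℝ) (F : ℝ) :
    HasDerivAt
      (fun F => Real.exp (-C * (F - L) / 2) * (C ^ 2 * F * (F - 4) + 4 * C * (F - 2) + 8)
        - (C ^ 2 * L * (L - 4) + 4 * C * (L - 2) + 8))
      (-(C ^ 3 / 2) * Real.exp (-C * (F - L) / 2) * F * (F - 4)) F := by
  have h1 : HasDerivAt (fun F : ℝ => -C * (F - L) / 2) (-C / 2) F := by
    have := (((hasDerivAt_id F).sub_const L).const_mul (-C)).div_const 2
    simpa using this
  have h2 := h1.exp
  have h3 := ((((hasDerivAt_id F).const_mul (C ^ 2)).mul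
      ((hasDerivAt_id F).sub_const 4)).add
      (((hasDerivAt_id F).sub_const 2).const_mul (4 * C))).add_const 8
  simp only [id_eq] at h3
  have h4 := (h2.mul h3).sub_const (C ^ 2 * L * (L - 4) + 4 * C * (L - 2) + 8)
  refine h4.congr_deriv ?_
  simp only [Pi.mul_apply, Pi.add_apply]
  ring

/-- Properties of the function `H̄1` arising from the first integral of the
U(2)-invariant gradient Kähler Ricci soliton ODE with `λ = 1`. -/
theorem Hbar1_properties (C L : ℝ) (hC : C ≠ 0) (hL : 0 < L) (hL4 : L < 4) :
    (Real.exp (-C * (L - L) / 2) * (C ^ 2 * L * (L - 4) + 4 * C * (L - 2) + 8)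
        - (C ^ 2 * L * (L - 4) + 4 * C * (L - 2) + 8) = 0) ∧
    (∀ F : ℝ,
      HasDerivAt
        (fun F => Real.exp (-C * (F - L) / 2) * (C ^ 2 * F * (F - 4) + 4 * C * (F - 2) + 8)
          - (C ^ 2 * L * (L - 4) + 4 * C * (L - 2) + 8))
        (-(C ^ 3 / 2) * Real.exp (-C * (F - L) / 2) * F * (F - 4)) F) ∧
    (∀ F ∈ Ioc L 4,
      Real.exp (-C * (F - L) / 2) * (C ^ 2 * F * (F - 4) + 4 * C * (F - 2) + 8)
        - (C ^ 2 * L * (L - 4) + 4 * C * (L - 2) + 8) ≠ 0) ∧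
    (∀ F₁ ∈ Ioi (4 : ℝ), ∀ F₂ ∈ Ioi (4 : ℝ),
      Real.exp (-C * (F₁ - L) / 2) * (C ^ 2 * F₁ * (F₁ - 4) + 4 * C * (F₁ - 2) + 8)
          - (C ^ 2 * L * (L - 4) + 4 * C * (L - 2) + 8) = 0 →
      Real.exp (-C * (F₂ - L) / 2) * (C ^ 2 * F₂ * (F₂ - 4) + 4 * C * (F₂ - 2) + 8)
          - (C ^ 2 * L * (L - 4) + 4 * C * (L - 2) + 8) = 0 →
      F₁ = F₂) := by
  have hd : ∀ F : ℝ, HasDerivAt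
      (fun F => Real.exp (-C * (F - L) / 2) * (C ^ 2 * F * (F - 4) + 4 * C * (F - 2) + 8)
        - (C ^ 2 * L * (L - 4) + 4 * C * (L - 2) + 8))
      (-(C ^ 3 / 2) * Real.exp (-C * (F - L) / 2) * F * (F - 4)) F :=
    fun F => Hbar1_deriv C L F
  set H : ℝ → ℝ := fun F =>
    Real.exp (-C * (F - L) / 2) * (C ^ 2 * F * (F - 4) + 4 * C * (F - 2) + 8)
      - (C ^ 2 * L * (L - 4) + 4 * C * (L - 2) + 8) with hH
  have hderiv : ∀ F : ℝ,
      deriv H F = -(C ^ 3 / 2) * Real.exp (-C * (F - L) / 2) * F * (F - 4) :=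
    fun F => (hd F).deriv
  have hcont : Continuous H := by
    have : Differentiable ℝ H := fun F => (hd F).differentiableAt
    exact this.continuous
  have hHL : H L = 0 := by simp [hH]
  -- sign of the derivative on (0, 4)
  have hsgn1 : ∀ x : ℝ, 0 < x → x < 4 →
      (0 < C → 0 < deriv H x) ∧ (C < 0 → deriv H x < 0) := by
    intro x hx0 hx4
    have hp : 0 < Real.exp (-C * (x - L) / 2) * x * (4 - x) :=
      mul_pos (mul_pos (Real.exp_pos _) hx0) (by linarith)
    constructor
    · intro hCpos
      have hC3 : 0 < C ^ 3 := pow_pos hCpos 3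
      rw [hderiv]
      nlinarith
    · intro hCneg
      have hC3 : C ^ 3 < 0 := Odd.pow_neg ⟨1, by norm_num⟩ hCneg
      rw [hderiv]
      nlinarith
  -- sign of the derivative on (4, ∞)
  have hsgn2 : ∀ x : ℝ, 4 < x →
      (0 < C → deriv H x < 0) ∧ (C < 0 → 0 < deriv H x) := by
    intro x hx4
    have hp : 0 < Real.exp (-C * (x - L) / 2) * x * (x - 4) :=
      mul_pos (mul_pos (Real.exp_pos _) (by linarith)) (by linarith)
    constructor
    · intro hCpos
      have hC3 : 0 < C ^ 3 := pow_pos hCpos 3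
      rw [hderiv]
      nlinarith
    · intro hCneg
      have hC3 : C ^ 3 < 0 := Odd.pow_neg ⟨1, by norm_num⟩ hCneg
      rw [hderiv]
      nlinarith
  refine ⟨by simpa [hH] using hHL, hd, ?_, ?_⟩
  · intro F hF
    show H F ≠ 0
    rcases hC.lt_or_gt with hCneg | hCpos
    · have mono : StrictAntiOn H (Icc L 4) := by
        apply strictAntiOn_of_deriv_neg (convex_Icc L 4) hcont.continuousOn
        intro x hx
        rw [interior_Icc] at hx
        exact (hsgn1 x (lt_trans hL hx.1) hx.2).2 hCneg
      have := mono (left_mem_Icc.2 hL4.le) ⟨hF.1.le, hF.2⟩ hF.1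
      rw [hHL] at this
      exact ne_of_lt this
    · have mono : StrictMonoOn H (Icc L 4) := by
        apply strictMonoOn_of_deriv_pos (convex_Icc L 4) hcont.continuousOn
        intro x hx
        rw [interior_Icc] at hx
        exact (hsgn1 x (lt_trans hL hx.1) hx.2).1 hCpos
      have := mono (left_mem_Icc.2 hL4.le) ⟨hF.1.le, hF.2⟩ hF.1
      rw [hHL] at this
      exact (ne_of_lt this).symm
  · intro F₁ hF₁ F₂ hF₂ h₁ h₂
    have inj : InjOn H (Ici (4 : ℝ)) := by
      rcases hC.lt_or_gt with hCneg | hCpos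
      · have mono : StrictMonoOn H (Ici (4 : ℝ)) := by
          apply strictMonoOn_of_deriv_pos (convex_Ici 4) hcont.continuousOn
          intro x hx
          rw [interior_Ici] at hx
          exact (hsgn2 x hx).2 hCneg
        exact mono.injOn
      · have mono : StrictAntiOn H (Ici (4 : ℝ)) := by
          apply strictAntiOn_of_deriv_neg (convex_Ici 4) hcont.continuousOn
          intro x hx
          rw [interior_Ici] at hx
          exact (hsgn2 x hx).1 hCpos
        exact mono.injOn
    exact inj (mem_Ici.2 (mem_Ioi.1 hF₁).le) (mem_Ici.2 (mem_Ioi.1 hF₂).le) (show H F₁ = H F₂ from h₁.trans h₂.symm)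
end
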